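/- With Π and Φ as above, the set {Π Q Π : Q ∈ B⁺(W)} equals {Φ M Φ* : M ∈ B⁺(Uⁿ)}, where B⁺ denotes nonnegative bounded operators. -/

import Mathlib

open RealInnerProductSpace

instance piLpCompleteSpace {ι : Type*} [Fintype ι] (U : Type*) [NormedAddCommGroup U]
    [InnerProductSpace ℝ U] [CompleteSpace U] :
    CompleteSpace (PiLp 2 (fun _ : ι => U)) :=
  inferInstance

section aux
variable {E F : Type*} [NormedAddCommGroup E] [InnerProductSpace ℝ E]
  [NormedAddCommGroup F] [InnerProductSpace ℝ F] [FiniteDimensional ℝ E] [CompleteSpace F]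

/-- Existence of a symmetric `N` with `Φ ∘ N ∘ Φ*` equal to the orthogonal projection
behaviour: `Φ (N (Φ* (Φ v))) = Φ v` for all `v`, plus symmetry. -/
theorem exists_symm_pseudoinv (Φ : E →L[ℝ] F) :
    ∃ N : E →L[ℝ] E, (∀ x y : E, ⟪N x, y⟫ = ⟪x, N y⟫) ∧
      (∀ v : E, Φ (N ((ContinuousLinearMap.adjoint Φ) (Φ v))) = Φ v) := by
  classical
  set A : E →L[ℝ] E := (ContinuousLinearMap.adjoint Φ).comp Φ with hA
  have hAinner : ∀ x y : E, ⟪A x, y⟫ = ⟪Φ x, Φ y⟫ := by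
    intro x y
    simp [hA, ContinuousLinearMap.adjoint_inner_left]
  set K : Submodule ℝ E := (LinearMap.ker (Φ : E →ₗ[ℝ] F))ᗮ with hK
  have hKerA : ∀ x : E, A x = 0 ↔ Φ x = 0 := by
    intro x
    constructor
    · intro h
      have : ⟪A x, x⟫ = 0 := by rw [h]; simp
      rw [hAinner] at this
      exact inner_self_eq_zero.mp this
    · intro h; simp [hA, h]
  -- A maps into K
  have hAmem : ∀ x : E, A x ∈ K := by
    intro x
    intro y hy
    have : Φ y = 0 := hy
    rw [real_inner_comm, hAinner, this]
    simp
  -- restriction of A to K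
  let Ares : K →ₗ[ℝ] K := LinearMap.codRestrict K ((A : E →ₗ[ℝ] E).comp K.subtype)
    (fun x => hAmem x)
  have hAresInj : Function.Injective Ares := by
    rw [← LinearMap.ker_eq_bot, LinearMap.ker_eq_bot']
    intro m hm
    have h0 : A (m : E) = 0 := congrArg Subtype.val hm
    have hker : (m : E) ∈ LinearMap.ker (Φ : E →ₗ[ℝ] F) := by
      simpa [LinearMap.mem_ker] using (hKerA (m : E)).mp h0
    have hz : (m : E) = 0 := by
      have h' : ⟪(m : E), (m : E)⟫ = 0 := m.2 _ hker
      exact inner_self_eq_zero.mp h'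
    exact Subtype.ext hz
  have hAresBij : Function.Bijective Ares :=
    ⟨hAresInj, (LinearMap.injective_iff_surjective).mp hAresInj⟩
  let Aeq : K ≃ₗ[ℝ] K := LinearEquiv.ofBijective Ares hAresBij
  let B : K ≃ₗ[ℝ] K := Aeq.symm
  have hAeq_apply : ∀ m : K, Aeq m = Ares m := fun m => rfl
  have hAB : ∀ m : K, Ares (B m) = m := fun m => Aeq.apply_symm_apply m
  have hBA : ∀ m : K, B (Ares m) = m := fun m => Aeq.symm_apply_apply m
  -- symmetry of Ares
  have hAresSymm : ∀ a b : K, ⟪(Ares a : E), (b : E)⟫ = ⟪(a : E), (Ares b : E)⟫ := by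
    intro a b
    show ⟪A (a : E), (b : E)⟫ = ⟪(a : E), A (b : E)⟫
    calc ⟪A (a : E), (b : E)⟫ = ⟪Φ (a : E), Φ (b : E)⟫ := hAinner _ _
      _ = ⟪Φ (b : E), Φ (a : E)⟫ := real_inner_comm _ _
      _ = ⟪A (b : E), (a : E)⟫ := (hAinner _ _).symm
      _ = ⟪(a : E), A (b : E)⟫ := real_inner_comm _ _
  have hBSymm : ∀ a b : K, ⟪(B a : E), (b : E)⟫ = ⟪(a : E), (B b : E)⟫ := by
    intro a b
    calc ⟪(B a : E), (b : E)⟫ = ⟪(B a : E), (Ares (B b) : E)⟫ := by rw [hAB]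
      _ = ⟪(Ares (B a) : E), (B b : E)⟫ := (hAresSymm _ _).symm
      _ = ⟪(a : E), (B b : E)⟫ := by rw [hAB]
  -- the orthogonal projection onto K
  let P : E →L[ℝ] K := K.orthogonalProjectionOnto
  have hPinner : ∀ (z : K) (y : E), ⟪(z : E), y⟫ = ⟪(z : E), (P y : E)⟫ := by
    intro z y
    have h1 : y - (P y : E) ∈ Kᗮ := Submodule.sub_starProjection_mem_orthogonal (K := K) y
    have h2 : ⟪(z : E), y - (P y : E)⟫ = 0 := h1 (z : E) z.2
    have := inner_sub_right (𝕜 := ℝ) (z : E) y (P y : E)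
    linarith [this ▸ h2]
  -- define N
  let N : E →L[ℝ] E := LinearMap.toContinuousLinearMap
    (K.subtype ∘ₗ (B : K →ₗ[ℝ] K) ∘ₗ ((P : E →L[ℝ] K) : E →ₗ[ℝ] K))
  have hNapp : ∀ x : E, N x = (B (P x) : E) := fun x => rfl
  refine ⟨N, ?_, ?_⟩
  · intro x y
    rw [hNapp, hNapp]
    calc ⟪(B (P x) : E), y⟫ = ⟪(B (P x) : E), (P y : E)⟫ := hPinner _ y
      _ = ⟪((P x) : E), (B (P y) : E)⟫ := hBSymm _ _
      _ = ⟪(B (P y) : E), ((P x) : E)⟫ := real_inner_comm _ _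
      _ = ⟪(B (P y) : E), x⟫ := (hPinner _ x).symm
      _ = ⟪x, (B (P y) : E)⟫ := real_inner_comm _ _
  · intro v
    show Φ (N (A v)) = Φ v
    -- v - P v ∈ ker Φ
    have hsub : v - (P v : E) ∈ LinearMap.ker (Φ : E →ₗ[ℝ] F) := by
      have h1 : v - (P v : E) ∈ (LinearMap.ker (Φ : E →ₗ[ℝ] F))ᗮᗮ :=
        Submodule.sub_starProjection_mem_orthogonal (K := K) v
      rwa [Submodule.orthogonal_orthogonal] at h1
    have hΦsub : Φ (v - (P v : E)) = 0 := hsub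
    have hΦPv : Φ ((P v : E)) = Φ v := by
      have h := map_sub Φ v (P v : E)
      rw [hΦsub] at h
      exact (sub_eq_zero.mp h.symm).symm
    have h0 : A (v - (P v : E)) = 0 := by
      have hr : A (v - (P v : E)) = (ContinuousLinearMap.adjoint Φ) (Φ (v - (P v : E))) := rfl
      rw [hr, hΦsub, map_zero]
    have hAvK : A v = ((Ares (P v) : K) : E) := by
      have h := map_sub A v (P v : E)
      rw [h0] at h
      exact sub_eq_zero.mp h.symm
    have hPAv : P (A v) = Ares (P v) := by
      have hc : ((P (A v)) : E) = A v := Submodule.starProjection_eq_self_iff (K := K) |>.mpr (hAmem v)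
      exact Subtype.ext (hc.trans hAvK)
    have hNAv : N (A v) = ((P v : K) : E) := by
      rw [hNapp, hPAv, hBA]
    rw [hNAv, hΦPv]

end aux

/-- The set `{Π Q Π : Q ∈ B⁺(W)}` coincides with `{Φ M Φ* : M ∈ B⁺(Uⁿ)}`. -/
theorem projection_conj_set_eq_Phi_set
    {U W : Type*} [NormedAddCommGroup U] [InnerProductSpace ℝ U]
    [FiniteDimensional ℝ U]
    [NormedAddCommGroup W] [InnerProductSpace ℝ W] [CompleteSpace W]
    (n : ℕ) (u : Fin n → U) (φ : U → (U →L[ℝ] W))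
    (Φ : PiLp 2 (fun _ : Fin n => U) →L[ℝ] W)
    (hΦ : ∀ v : PiLp 2 (fun _ : Fin n => U), Φ v = ∑ i, φ (u i) (v i))
    (Pr : W →L[ℝ] W)
    (hidem : Pr.comp Pr = Pr)
    (hsa : ContinuousLinearMap.adjoint Pr = Pr)
    (hrange : LinearMap.range (Pr : W →ₗ[ℝ] W)
      = ∑ i, LinearMap.range ((φ (u i) : U →ₗ[ℝ] W))) :
    {R : W →L[ℝ] W | ∃ Q : W →L[ℝ] W, (∀ w, 0 ≤ ⟪Q w, w⟫) ∧ R = Pr.comp (Q.comp Pr)}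
      = {R : W →L[ℝ] W | ∃ M : PiLp 2 (fun _ : Fin n => U) →L[ℝ] PiLp 2 (fun _ : Fin n => U),
          (∀ x, 0 ≤ ⟪M x, x⟫) ∧ R = Φ.comp (M.comp (ContinuousLinearMap.adjoint Φ))} := by

  classical
  have hidem' : ∀ w, Pr (Pr w) = Pr w := fun w => by
    have := ContinuousLinearMap.ext_iff.mp hidem w
    simpa using this
  -- Pr is the identity on the range of Φ
  have hPrΦ : ∀ v, Pr (Φ v) = Φ v := by
    intro v
    have hmem : Φ v ∈ LinearMap.range (Pr : W →ₗ[ℝ] W) := by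
      rw [hrange, hΦ]
      exact Submodule.sum_mem _ (fun i _ =>
        Finset.single_le_sum (f := fun i => LinearMap.range ((φ (u i) : U →ₗ[ℝ] W)))
          (fun j _ => bot_le) (Finset.mem_univ i)
          (LinearMap.mem_range.mpr ⟨v i, rfl⟩))
    obtain ⟨x, hx⟩ := hmem
    rw [← hx]
    exact hidem' x
  -- adjoint Φ absorbs Pr
  have hadjΦ : ∀ w, (ContinuousLinearMap.adjoint Φ) (Pr w)
      = (ContinuousLinearMap.adjoint Φ) w := by
    intro w
    apply ext_inner_right ℝ
    intro v
    rw [ContinuousLinearMap.adjoint_inner_left, ContinuousLinearMap.adjoint_inner_left]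
    have h1 : ⟪Pr w, Φ v⟫ = ⟪w, Pr (Φ v)⟫ := by
      conv_lhs => rw [← hsa]
      exact ContinuousLinearMap.adjoint_inner_left Pr (Φ v) w
    rw [h1, hPrΦ]
  -- range of Pr is contained in range of Φ
  have hPrRange : ∀ w, ∃ v, Φ v = Pr w := by
    intro w
    have hle : LinearMap.range (Pr : W →ₗ[ℝ] W) ≤ LinearMap.range (Φ : PiLp 2 (fun _ : Fin n => U) →ₗ[ℝ] W) := by
      rw [hrange]
      refine Finset.sum_induction _ (· ≤ LinearMap.range (Φ : PiLp 2 (fun _ : Fin n => U) →ₗ[ℝ] W))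
        (fun a b ha hb => sup_le ha hb) bot_le (fun i _ => ?_)
      rintro x ⟨y, rfl⟩
      refine LinearMap.mem_range.mpr ⟨WithLp.toLp 2 (Pi.single i y : ∀ _ : Fin n, U), ?_⟩
      show Φ (WithLp.toLp 2 (Pi.single i y : ∀ _ : Fin n, U)) = φ (u i) y
      rw [hΦ]
      simp [Pi.single_apply, apply_ite, Finset.sum_ite_eq']
    obtain ⟨v, hv⟩ := hle (LinearMap.mem_range.mpr ⟨w, rfl⟩)
    exact ⟨v, hv⟩
  -- the symmetric pseudo-inverse
  obtain ⟨N, hNsymm, hNΦ⟩ := exists_symm_pseudoinv Φ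
  -- key: Φ ∘ N ∘ Φ* = Pr
  have hkey : ∀ w, Φ (N ((ContinuousLinearMap.adjoint Φ) w)) = Pr w := by
    intro w
    obtain ⟨v, hv⟩ := hPrRange w
    rw [← hadjΦ w, ← hv, hNΦ v]
  ext R
  simp only [Set.mem_setOf_eq]
  constructor
  · rintro ⟨Q, hQ, rfl⟩
    refine ⟨N.comp ((ContinuousLinearMap.adjoint Φ).comp (Q.comp (Φ.comp N))), ?_, ?_⟩
    · intro x
      have h1 : ⟪N ((ContinuousLinearMap.adjoint Φ) (Q (Φ (N x)))), x⟫
          = ⟪(ContinuousLinearMap.adjoint Φ) (Q (Φ (N x))), N x⟫ := hNsymm _ _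
      have h2 : ⟪(ContinuousLinearMap.adjoint Φ) (Q (Φ (N x))), N x⟫
          = ⟪Q (Φ (N x)), Φ (N x)⟫ := ContinuousLinearMap.adjoint_inner_left _ _ _
      simpa [ContinuousLinearMap.comp_apply, h1, h2] using hQ (Φ (N x))
    · ext w
      simp only [ContinuousLinearMap.comp_apply]
      rw [hkey, hkey]
  · rintro ⟨M, hM, rfl⟩
    refine ⟨Φ.comp (M.comp (ContinuousLinearMap.adjoint Φ)), ?_, ?_⟩
    · intro w
      have h1 : ⟪Φ (M ((ContinuousLinearMap.adjoint Φ) w)), w⟫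
          = ⟪M ((ContinuousLinearMap.adjoint Φ) w), (ContinuousLinearMap.adjoint Φ) w⟫ := by
        rw [real_inner_comm, ← ContinuousLinearMap.adjoint_inner_left Φ,
          real_inner_comm]
      simpa [ContinuousLinearMap.comp_apply, h1] using hM ((ContinuousLinearMap.adjoint Φ) w)
    · ext w
      simp only [ContinuousLinearMap.comp_apply]
      rw [hadjΦ, hPrΦ]
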